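/- Let A(x) ∈ M_r(ℂ[x]) and let g(x) = [[1, ᵗb₁x + ᵗb₀],[0, B]] ∈ G_r with B ∈ GL_{r−1}(ℂ). Then, as an identity of polynomials in ℂ[x], det D(g(x)⁻¹A(x)g(x); x) = (det B)⁻¹ · det D(A(x); x). -/
import Mathlib

open Polynomial Matrix Finset

noncomputable section

/-- Coefficients of the triangular change of basis. -/
def qaux {R : Type*} [CommRing R] (s : ℕ → R) : ℕ → ℕ → R
  | 0, j => if j = 0 then 1 else 0
  | k+1, 0 => s k
  | k+1, j+1 => qaux s k j

lemma qaux_diag {R : Type*} [CommRing R] (s : ℕ → R) : ∀ k, qaux s k k = 1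
  | 0 => by simp [qaux]
  | k+1 => by simpa [qaux] using qaux_diag s k

lemma qaux_zero {R : Type*} [CommRing R] (s : ℕ → R) :
    ∀ k j, k < j → qaux s k j = 0
  | 0, j+1, _ => by simp [qaux]
  | k+1, j+1, h => by simpa [qaux] using qaux_zero s k j (by omega)

lemma key {R : Type*} [CommRing R] {m : ℕ}
    (B T T' : Matrix (Fin m) (Fin m) R) (u u' w : Fin m → R)
    (hu : B *ᵥ u' = u)
    (hT : B * T' = T * B + vecMulVec u w) :
    B.det * (Matrix.of fun i j : Fin m => ((T' ^ (j : ℕ)) *ᵥ u') i).det =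
      (Matrix.of fun i j : Fin m => ((T ^ (j : ℕ)) *ᵥ u) i).det := by
  set s : ℕ → R := fun k => w ⬝ᵥ ((T' ^ k) *ᵥ u') with hs
  have hm : ∀ k : ℕ, B *ᵥ ((T' ^ k) *ᵥ u') =
      ∑ j ∈ range (k+1), qaux s k j • ((T ^ j) *ᵥ u) := by
    intro k
    induction k with
    | zero => simp [qaux, hu]
    | succ k ih =>
      have h1 : (T' ^ (k+1)) *ᵥ u' = T' *ᵥ ((T' ^ k) *ᵥ u') := by
        rw [mulVec_mulVec, ← pow_succ']
      rw [h1, mulVec_mulVec, hT, add_mulVec]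
      have h2 : vecMulVec u w *ᵥ ((T' ^ k) *ᵥ u') = s k • u := by
        funext i
        simp only [vecMulVec, mulVec, dotProduct, of_apply, Pi.smul_apply, smul_eq_mul, hs,
          Finset.mul_sum]
        rw [Finset.sum_mul]
        refine Finset.sum_congr rfl fun x _ => ?_
        rw [Finset.sum_mul]
        refine Finset.sum_congr rfl fun l _ => ?_
        ring
      rw [h2, show (T * B) *ᵥ ((T' ^ k) *ᵥ u') = T *ᵥ (B *ᵥ ((T' ^ k) *ᵥ u')) from
        (mulVec_mulVec _ _ _).symm, ih]
      have h3 : T *ᵥ (∑ j ∈ range (k+1), qaux s k j • ((T ^ j) *ᵥ u)) =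
          ∑ j ∈ range (k+1), qaux s k j • ((T ^ (j+1)) *ᵥ u) := by
        rw [← mulVecLin_apply, map_sum]
        refine Finset.sum_congr rfl fun j _ => ?_
        rw [_root_.map_smul, mulVecLin_apply, mulVec_mulVec, ← pow_succ']
      rw [h3]
      conv_rhs => rw [Finset.sum_range_succ']
      simp [qaux]
  set D' : Matrix (Fin m) (Fin m) R := Matrix.of fun i j : Fin m => ((T' ^ (j : ℕ)) *ᵥ u') i
  set D : Matrix (Fin m) (Fin m) R := Matrix.of fun i j : Fin m => ((T ^ (j : ℕ)) *ᵥ u) i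
  set P : Matrix (Fin m) (Fin m) R := Matrix.of fun i j : Fin m => qaux s (j : ℕ) (i : ℕ) with hP
  have hBD : B * D' = D * P := by
    ext i j
    have h4 : (B * D') i j = (B *ᵥ ((T' ^ (j : ℕ)) *ᵥ u')) i := rfl
    rw [h4, hm (j : ℕ)]
    have h5 : (∑ l ∈ range ((j : ℕ)+1), qaux s (j : ℕ) l • ((T ^ l) *ᵥ u)) i =
        ∑ l ∈ range ((j : ℕ)+1), qaux s (j : ℕ) l * ((T ^ l) *ᵥ u) i := by
      simp
    rw [h5]
    rw [Finset.sum_subset (Finset.range_subset_range.mpr (by omega : (j : ℕ) + 1 ≤ m))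
      (fun l _ hl => by rw [qaux_zero s (j : ℕ) l (by simpa using hl), zero_mul])]
    have h6 : (D * P) i j = ∑ l : Fin m, ((T ^ (l : ℕ)) *ᵥ u) i * qaux s (j : ℕ) (l : ℕ) :=
      rfl
    rw [h6, Fin.sum_univ_eq_sum_range (fun l => ((T ^ l) *ᵥ u) i * qaux s (j : ℕ) l)]
    exact Finset.sum_congr rfl fun l _ => mul_comm _ _
  have hPdet : P.det = 1 := by
    have : P.BlockTriangular id := by
      intro i j hij
      exact qaux_zero s (j : ℕ) (i : ℕ) (by exact_mod_cast hij)
    rw [Matrix.det_of_upperTriangular this]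
    simp [hP, qaux_diag]
  calc B.det * D'.det = (B * D').det := (det_mul _ _).symm
    _ = (D * P).det := by rw [hBD]
    _ = D.det * P.det := det_mul _ _
    _ = D.det := by rw [hPdet, mul_one]

/-- The space `M(r,d)` of polynomial matrices, with `r = n+2`. -/
def Mrd (n d : ℕ) (A : Matrix (Fin (n+2)) (Fin (n+2)) (Polynomial ℂ)) : Prop :=
  (A 0 0).degree ≤ (d : WithBot ℕ) ∧
  (∀ j : Fin (n+1), (A 0 j.succ).degree ≤ ((d+1 : ℕ) : WithBot ℕ)) ∧
  (∀ i : Fin (n+1), (A i.succ 0).degree ≤ ((d-1 : ℕ) : WithBot ℕ)) ∧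
  (∀ i j : Fin (n+1), (A i.succ j.succ).degree ≤ (d : WithBot ℕ))

/-- The group `G_r`, `r = n+2`: block form `[[1, ᵗb₁x + ᵗb₀],[0, B]]` with `B ∈ GL_{r-1}(ℂ)`. -/
def Gr (n : ℕ) (g : Matrix (Fin (n+2)) (Fin (n+2)) (Polynomial ℂ)) : Prop :=
  g 0 0 = 1 ∧
  (∀ i : Fin (n+1), g i.succ 0 = 0) ∧
  (∀ j : Fin (n+1), (g 0 j.succ).degree ≤ 1) ∧
  (∀ i j : Fin (n+1), (g i.succ j.succ).degree ≤ 0) ∧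
  IsUnit g.det

/-- The block `u(x)` of `A(x)`. -/
def blkU (n : ℕ) (A : Matrix (Fin (n+2)) (Fin (n+2)) (Polynomial ℂ)) :
    Fin (n+1) → Polynomial ℂ := fun i => A i.succ 0

/-- The block `T(x)` of `A(x)`. -/
def blkT (n : ℕ) (A : Matrix (Fin (n+2)) (Fin (n+2)) (Polynomial ℂ)) :
    Matrix (Fin (n+1)) (Fin (n+1)) (Polynomial ℂ) := Matrix.of fun i j => A i.succ j.succ

/-- `D(A(x); x) = (u(x), T(x)u(x), …, T(x)^{r−2}u(x))`. -/
def Dmat (n : ℕ) (A : Matrix (Fin (n+2)) (Fin (n+2)) (Polynomial ℂ)) :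
    Matrix (Fin (n+1)) (Fin (n+1)) (Polynomial ℂ) :=
  Matrix.of fun i j => ((blkT n A ^ (j : ℕ)) *ᵥ blkU n A) i

/-- `D(A(x); c)`, evaluation at `x = c`. -/
def Dc (n : ℕ) (A : Matrix (Fin (n+2)) (Fin (n+2)) (Polynomial ℂ)) (c : ℂ) :
    Matrix (Fin (n+1)) (Fin (n+1)) ℂ :=
  (Dmat n A).map (eval c)

/-- The lower shift matrix `τ`. -/
def tauMat (n : ℕ) : Matrix (Fin (n+1)) (Fin (n+1)) ℂ :=
  Matrix.of fun i j => if (i : ℕ) = (j : ℕ) + 1 then 1 else 0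

/-- The vector `ν = ᵗ(1,0,…,0)`. -/
def nuVec (n : ℕ) : Fin (n+1) → ℂ := fun i => if (i : ℕ) = 0 then 1 else 0



theorem stmt3 (n : ℕ)
    (A g : Matrix (Fin (n+2)) (Fin (n+2)) (Polynomial ℂ)) (hg : Gr n g) :
    (Dmat n (g⁻¹ * A * g)).det =
      Polynomial.C ((Matrix.of fun i j : Fin (n+1) => (g i.succ j.succ).coeff 0).det)⁻¹ *
        (Dmat n A).det := by
  obtain ⟨hg00, hgi0, _, hgdeg0, hgu⟩ := hg
  set A' : Matrix (Fin (n+2)) (Fin (n+2)) (Polynomial ℂ) := g⁻¹ * A * g with hA'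
  have hgA' : g * A' = A * g := by
    rw [hA', ← Matrix.mul_assoc, ← Matrix.mul_assoc, Matrix.mul_nonsing_inv g hgu, one_mul]
  set w : Fin (n+1) → Polynomial ℂ := fun j => g 0 j.succ with hw
  have hu : blkT n g *ᵥ blkU n A' = blkU n A := by
    funext i
    have h := congrFun (congrFun hgA' i.succ) 0
    rw [Matrix.mul_apply, Matrix.mul_apply] at h
    have hL : ∑ k : Fin (n+2), g i.succ k * A' k 0
        = ∑ k : Fin (n+1), g i.succ k.succ * A' k.succ 0 := by
      rw [Fin.sum_univ_succ, hgi0, zero_mul, zero_add]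
    have hR : ∑ k : Fin (n+2), A i.succ k * g k 0 = A i.succ 0 := by
      rw [Fin.sum_univ_succ, hg00, mul_one]
      simp [hgi0]
    rw [hL, hR] at h
    simpa [blkT, blkU, mulVec, dotProduct] using h
  have hT : blkT n g * blkT n A' = blkT n A * blkT n g + vecMulVec (blkU n A) w := by
    refine Matrix.ext fun i j => ?_
    have h := congrFun (congrFun hgA' i.succ) j.succ
    rw [Matrix.mul_apply, Matrix.mul_apply] at h
    have hL : ∑ k : Fin (n+2), g i.succ k * A' k j.succ
        = ∑ k : Fin (n+1), g i.succ k.succ * A' k.succ j.succ := by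
      rw [Fin.sum_univ_succ, hgi0, zero_mul, zero_add]
    have hR : ∑ k : Fin (n+2), A i.succ k * g k j.succ
        = A i.succ 0 * g 0 j.succ + ∑ k : Fin (n+1), A i.succ k.succ * g k.succ j.succ :=
      Fin.sum_univ_succ _
    rw [hL, hR] at h
    simp only [Matrix.mul_apply, Matrix.add_apply, vecMulVec, blkT, blkU, Matrix.of_apply, hw]
    exact h.trans (add_comm _ _)
  have hkey : (blkT n g).det * (Dmat n A').det = (Dmat n A).det :=
    key (blkT n g) (blkT n A) (blkT n A') (blkU n A) (blkU n A') w hu hT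
  set b : ℂ := (Matrix.of fun i j : Fin (n+1) => (g i.succ j.succ).coeff 0).det with hb
  have hBC : blkT n g = (Matrix.of fun i j : Fin (n+1) => (g i.succ j.succ).coeff 0).map C := by
    refine Matrix.ext fun i j => ?_
    simp only [blkT, Matrix.of_apply, Matrix.map_apply]
    exact Polynomial.eq_C_of_degree_le_zero (hgdeg0 i j)
  have hdetB : (blkT n g).det = C b := by
    rw [hBC, hb]
    exact (RingHom.map_det (C : ℂ →+* Polynomial ℂ) _).symm
  have hdetg : g.det = (blkT n g).det := by
    rw [Matrix.det_succ_column_zero, Fin.sum_univ_succ]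
    simp only [hgi0, hg00, mul_zero, zero_mul, Finset.sum_const_zero, add_zero,
      Fin.val_zero, pow_zero, one_mul, mul_one]
    congr 1
  have hbne : b ≠ 0 := by
    have h1 : IsUnit (C b) := by
      rw [← hdetB, ← hdetg]; exact hgu
    exact (Polynomial.isUnit_C.mp h1).ne_zero
  rw [hdetB] at hkey
  calc (Dmat n A').det = (C b⁻¹ * C b) * (Dmat n A').det := by
        rw [← C_mul, inv_mul_cancel₀ hbne, C_1, one_mul]
    _ = C b⁻¹ * (C b * (Dmat n A').det) := mul_assoc _ _ _
    _ = C b⁻¹ * (Dmat n A).det := by rw [hkey]
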